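/- Let f₁, …, fₙ : ℝ → ℝ be real-analytic functions and let γ > 0 satisfy |fⱼ''(x)| ≤ γ for all x ∈ ℝ and all j = 1, …, n. Let f : ℝ → ℝ be a continuous function such that f(x) ∈ {f₁(x), …, fₙ(x)} for every x ∈ ℝ. Fix xₖ ∈ ℝ and define the piecewise quadratic model qₖ(x) := f(xₖ) + (max_{j=1,…,n} fⱼ'(xₖ))(x − xₖ) − (γ/2)(x − xₖ)² for x < xₖ, and qₖ(x) := f(xₖ) + (min_{j=1,…,n} fⱼ'(xₖ))(x − xₖ) − (γ/2)(x − xₖ)² for x ≥ xₖ. Then f(x) ≥ qₖ(x) for all x ∈ ℝ. -/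

import Mathlib

open Set Filter Topology

/-- A continuous selection from finitely many continuous functions, each monotone on an
order-connected set, is itself monotone on that set. -/
private lemma selection_monotoneOn {n : ℕ} {g : Fin n → ℝ → ℝ} {h : ℝ → ℝ} {s : Set ℝ}
    (hso : s.OrdConnected)
    (hgc : ∀ j, Continuous (g j)) (hgm : ∀ j, MonotoneOn (g j) s)
    (hhc : Continuous h) (hsel : ∀ x ∈ s, ∃ j, h x = g j x) :
    MonotoneOn h s := by
  intro a ha b hb hab
  by_contra hlt
  push_neg at hlt
  have hIcc : Icc a b ⊆ s := hso.out ha hb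
  set S : Set ℝ := Icc a b ∩ h ⁻¹' (Ici (h a)) with hS
  have hSclosed : IsClosed S := isClosed_Icc.inter (isClosed_Ici.preimage hhc)
  have hSne : S.Nonempty := ⟨a, ⟨le_refl a, hab⟩, le_refl (h a)⟩
  have hScomp : IsCompact S := isCompact_Icc.of_isClosed_subset hSclosed inter_subset_left
  set c := sSup S with hc
  have hcS : c ∈ S := hScomp.sSup_mem hSne
  have hac : a ≤ c := hcS.1.1
  have hcb : c ≤ b := hcS.1.2
  have hhca : h a ≤ h c := hcS.2
  have hcb' : c < b := lt_of_le_of_ne hcb fun heq => absurd (heq ▸ hhca) (not_le.2 hlt)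
  have hmem : Ioc c b ∈ 𝓝[>] c := Ioc_mem_nhdsGT_of_mem ⟨le_refl c, hcb'⟩
  have key : ∃ j, ∃ᶠ x in 𝓝[>] c, h x = g j x ∧ x ∈ Ioc c b := by
    by_contra hcon
    push_neg at hcon
    have hall : ∀ᶠ x in 𝓝[>] c, ∀ j : Fin n, ¬(h x = g j x ∧ x ∈ Ioc c b) :=
      Filter.eventually_all.2 fun j => (hcon j).mono fun x hx h' => hx h'.1 h'.2
    have hfalse : ∀ᶠ x in 𝓝[>] c, False := by
      filter_upwards [hall, hmem] with x hx hx'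
      obtain ⟨j, hj⟩ := hsel x (hIcc ⟨hac.trans hx'.1.le, hx'.2⟩)
      exact hx j ⟨hj, hx'⟩
    obtain ⟨x, hx⟩ := hfalse.exists
    exact hx
  obtain ⟨j, hj⟩ := key
  have hgl : Tendsto (g j) (𝓝[>] c) (𝓝 (g j c)) :=
    ((hgc j).tendsto c).mono_left nhdsWithin_le_nhds
  have hhl : Tendsto h (𝓝[>] c) (𝓝 (h c)) := (hhc.tendsto c).mono_left nhdsWithin_le_nhds
  have hgjc : h c = g j c :=
    tendsto_nhds_unique_of_frequently_eq hhl hgl (hj.mono fun x hx => hx.1)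
  obtain ⟨x, hx1, hx2⟩ := hj.exists
  have hxs : x ∈ s := hIcc ⟨hac.trans hx2.1.le, hx2.2⟩
  have hcs : c ∈ s := hIcc hcS.1
  have hxS : h x < h a := by
    by_contra hge
    push_neg at hge
    have hxc : x ≤ c := le_csSup hScomp.bddAbove ⟨⟨hac.trans hx2.1.le, hx2.2⟩, hge⟩
    exact absurd hx2.1 (not_lt.2 hxc)
  have : h a ≤ h x := by
    calc h a ≤ h c := hhca
      _ = g j c := hgjc
      _ ≤ g j x := hgm j hcs hxs hx2.1.le
      _ = h x := hx1.symm
  exact absurd hxS (not_lt.2 this)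

/-- Antitone version of `selection_monotoneOn`. -/
private lemma selection_antitoneOn {n : ℕ} {g : Fin n → ℝ → ℝ} {h : ℝ → ℝ} {s : Set ℝ}
    (hso : s.OrdConnected)
    (hgc : ∀ j, Continuous (g j)) (hgm : ∀ j, AntitoneOn (g j) s)
    (hhc : Continuous h) (hsel : ∀ x ∈ s, ∃ j, h x = g j x) :
    AntitoneOn h s := by
  intro a ha b hb hab
  by_contra hlt
  push_neg at hlt
  have hIcc : Icc a b ⊆ s := hso.out ha hb
  set S : Set ℝ := Icc a b ∩ h ⁻¹' (Ici (h b)) with hS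
  have hSclosed : IsClosed S := isClosed_Icc.inter (isClosed_Ici.preimage hhc)
  have hSne : S.Nonempty := ⟨b, ⟨hab, le_refl b⟩, le_refl (h b)⟩
  have hScomp : IsCompact S := isCompact_Icc.of_isClosed_subset hSclosed inter_subset_left
  set c := sInf S with hc
  have hcS : c ∈ S := hScomp.sInf_mem hSne
  have hac : a ≤ c := hcS.1.1
  have hcb : c ≤ b := hcS.1.2
  have hhcb : h b ≤ h c := hcS.2
  have hac' : a < c := lt_of_le_of_ne hac fun heq => absurd (heq ▸ hhcb) (not_le.2 hlt)
  have hmem : Ico a c ∈ 𝓝[<] c := Ico_mem_nhdsLT_of_mem ⟨hac', le_refl c⟩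
  have key : ∃ j, ∃ᶠ x in 𝓝[<] c, h x = g j x ∧ x ∈ Ico a c := by
    by_contra hcon
    push_neg at hcon
    have hall : ∀ᶠ x in 𝓝[<] c, ∀ j : Fin n, ¬(h x = g j x ∧ x ∈ Ico a c) :=
      Filter.eventually_all.2 fun j => (hcon j).mono fun x hx h' => hx h'.1 h'.2
    have hfalse : ∀ᶠ x in 𝓝[<] c, False := by
      filter_upwards [hall, hmem] with x hx hx'
      obtain ⟨j, hj⟩ := hsel x (hIcc ⟨hx'.1, hx'.2.le.trans hcb⟩)
      exact hx j ⟨hj, hx'⟩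
    obtain ⟨x, hx⟩ := hfalse.exists
    exact hx
  obtain ⟨j, hj⟩ := key
  have hgl : Tendsto (g j) (𝓝[<] c) (𝓝 (g j c)) :=
    ((hgc j).tendsto c).mono_left nhdsWithin_le_nhds
  have hhl : Tendsto h (𝓝[<] c) (𝓝 (h c)) := (hhc.tendsto c).mono_left nhdsWithin_le_nhds
  have hgjc : h c = g j c :=
    tendsto_nhds_unique_of_frequently_eq hhl hgl (hj.mono fun x hx => hx.1)
  obtain ⟨x, hx1, hx2⟩ := hj.exists
  have hxs : x ∈ s := hIcc ⟨hx2.1, hx2.2.le.trans hcb⟩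
  have hcs : c ∈ s := hIcc hcS.1
  have hxS : h x < h b := by
    by_contra hge
    push_neg at hge
    have hxc : c ≤ x := csInf_le hScomp.bddBelow ⟨⟨hx2.1, hx2.2.le.trans hcb⟩, hge⟩
    exact absurd hx2.2 (not_lt.2 hxc)
  have : h b ≤ h x := by
    calc h b ≤ h c := hhcb
      _ = g j c := hgjc
      _ ≤ g j x := hgm j hxs hcs hx2.2.le
      _ = h x := hx1.symm
  exact absurd hxS (not_lt.2 this)

theorem quadratic_model_le_piecewise_analytic_univariate
    (n : ℕ) (fs : Fin n → ℝ → ℝ)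
    (hfs : ∀ j : Fin n, ∀ x : ℝ, AnalyticAt ℝ (fs j) x)
    (γ : ℝ) (hγ : 0 < γ)
    (hbound : ∀ j : Fin n, ∀ x : ℝ, |deriv (deriv (fs j)) x| ≤ γ)
    (f : ℝ → ℝ) (hf : Continuous f)
    (hpiece : ∀ x : ℝ, ∃ j : Fin n, f x = fs j x)
    (xk : ℝ) :
    ∀ x : ℝ,
      (x < xk →
        f x ≥ f xk + (⨆ j : Fin n, deriv (fs j) xk) * (x - xk) - γ / 2 * (x - xk) ^ 2) ∧
      (xk ≤ x →
        f x ≥ f xk + (⨅ j : Fin n, deriv (fs j) xk) * (x - xk) - γ / 2 * (x - xk) ^ 2) := by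
  have hdiff : ∀ j, Differentiable ℝ (fs j) := fun j x => (hfs j x).differentiableAt
  have hAOn : ∀ j, AnalyticOnNhd ℝ (fs j) univ := fun j x _ => hfs j x
  have hdiff' : ∀ j, Differentiable ℝ (deriv (fs j)) := fun j x =>
    ((hAOn j).deriv x (mem_univ x)).differentiableAt
  have hlip : ∀ j, LipschitzWith γ.toNNReal (deriv (fs j)) := by
    intro j
    refine lipschitzWith_of_nnnorm_deriv_le (hdiff' j) fun x => ?_
    rw [← NNReal.coe_le_coe, coe_nnnorm, Real.coe_toNNReal _ hγ.le, Real.norm_eq_abs]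
    exact hbound j x
  have hlip' : ∀ j, ∀ t : ℝ, |deriv (fs j) t - deriv (fs j) xk| ≤ γ * |t - xk| := by
    intro j t
    have := (hlip j).dist_le_mul t xk
    rwa [Real.dist_eq, Real.dist_eq, Real.coe_toNNReal _ hγ.le] at this
  -- the two model slopes
  set M := ⨆ j : Fin n, deriv (fs j) xk with hM
  set m := ⨅ j : Fin n, deriv (fs j) xk with hm
  have hm_le : ∀ j, m ≤ deriv (fs j) xk := fun j =>
    ciInf_le (Set.Finite.bddBelow (Set.finite_range fun j => deriv (fs j) xk)) j
  have hM_ge : ∀ j, deriv (fs j) xk ≤ M := fun j =>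
    le_ciSup (Set.Finite.bddAbove (Set.finite_range fun j => deriv (fs j) xk)) j
  -- derivatives of the quadratic models
  have hq : ∀ (μ : ℝ) (t : ℝ),
      HasDerivAt (fun x : ℝ => f xk + μ * (x - xk) - γ / 2 * (x - xk) ^ 2)
        (μ - γ * (t - xk)) t := by
    intro μ t
    have h1 : HasDerivAt (fun x : ℝ => x - xk) 1 t := (hasDerivAt_id t).sub_const xk
    have h2 : HasDerivAt (fun x : ℝ => f xk + μ * (x - xk)) (μ * 1) t :=
      (h1.const_mul μ).const_add (f xk)
    have h3 : HasDerivAt (fun x : ℝ => γ / 2 * (x - xk) ^ 2)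
        (γ / 2 * (2 * (t - xk) ^ 1 * 1)) t := (h1.pow 2).const_mul (γ / 2)
    have := h2.sub h3
    exact this.congr_deriv (by ring)
  have hqcont : ∀ μ : ℝ, Continuous fun x : ℝ => f xk + μ * (x - xk) - γ / 2 * (x - xk) ^ 2 :=
    fun μ => (continuous_const.add (continuous_const.mul
      (continuous_id.sub continuous_const))).sub
      (continuous_const.mul ((continuous_id.sub continuous_const).pow 2))
  -- piece functions minus model are monotone on [xk, ∞) (with slope m)
  have hgmono : ∀ j, MonotoneOn
      (fun x : ℝ => fs j x - (f xk + m * (x - xk) - γ / 2 * (x - xk) ^ 2)) (Ici xk) := by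
    intro j
    refine monotoneOn_of_deriv_nonneg (convex_Ici xk)
      (((hdiff j).continuous.sub (hqcont m)).continuousOn)
      (fun t _ => ((hdiff j t).sub (hq m t).differentiableAt).differentiableWithinAt)
      fun t ht => ?_
    rw [interior_Ici] at ht
    have hd : HasDerivAt (fun x : ℝ => fs j x - (f xk + m * (x - xk) - γ / 2 * (x - xk) ^ 2))
        (deriv (fs j) t - (m - γ * (t - xk))) t := ((hdiff j t).hasDerivAt).sub (hq m t)
    rw [hd.deriv]
    have h1 := (abs_le.1 (hlip' j t)).1
    have h2 : |t - xk| = t - xk := abs_of_nonneg (by linarith [ht.out])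
    have h3 := hm_le j
    rw [h2] at h1
    linarith
  -- piece functions minus model are antitone on (-∞, xk] (with slope M)
  have hganti : ∀ j, AntitoneOn
      (fun x : ℝ => fs j x - (f xk + M * (x - xk) - γ / 2 * (x - xk) ^ 2)) (Iic xk) := by
    intro j
    refine antitoneOn_of_deriv_nonpos (convex_Iic xk)
      (((hdiff j).continuous.sub (hqcont M)).continuousOn)
      (fun t _ => ((hdiff j t).sub (hq M t).differentiableAt).differentiableWithinAt)
      fun t ht => ?_
    rw [interior_Iic] at ht
    have hd : HasDerivAt (fun x : ℝ => fs j x - (f xk + M * (x - xk) - γ / 2 * (x - xk) ^ 2))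
        (deriv (fs j) t - (M - γ * (t - xk))) t := ((hdiff j t).hasDerivAt).sub (hq M t)
    rw [hd.deriv]
    have h1 := (abs_le.1 (hlip' j t)).2
    have h2 : |t - xk| = -(t - xk) := abs_of_nonpos (by linarith [ht.out])
    have h3 := hM_ge j
    rw [h2] at h1
    linarith
  -- selection lemma applications
  have hmono : MonotoneOn
      (fun x : ℝ => f x - (f xk + m * (x - xk) - γ / 2 * (x - xk) ^ 2)) (Ici xk) := by
    refine selection_monotoneOn ordConnected_Ici
      (fun j => (hdiff j).continuous.sub (hqcont m)) hgmono
      (hf.sub (hqcont m)) fun x _ => ?_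
    obtain ⟨j, hj⟩ := hpiece x
    exact ⟨j, by simp only [hj, Pi.sub_apply]⟩
  have hanti : AntitoneOn
      (fun x : ℝ => f x - (f xk + M * (x - xk) - γ / 2 * (x - xk) ^ 2)) (Iic xk) := by
    refine selection_antitoneOn ordConnected_Iic
      (fun j => (hdiff j).continuous.sub (hqcont M)) hganti
      (hf.sub (hqcont M)) fun x _ => ?_
    obtain ⟨j, hj⟩ := hpiece x
    exact ⟨j, by simp only [hj, Pi.sub_apply]⟩
  intro x
  constructor
  · intro hx
    have := hanti (mem_Iic.2 hx.le) (mem_Iic.2 (le_refl xk)) hx.le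
    simp only at this
    nlinarith [this]
  · intro hx
    have := hmono (mem_Ici.2 (le_refl xk)) (mem_Ici.2 hx) hx
    simp only at this
    nlinarith [this]
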